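/- arXiv:1810.02732 — 2 statements merged into one kernel-verified Lean document; each statement's English description precedes it below -/
import Mathlib

section
/- (Abel-type identity, case (p,q) = (−2,−2)) For every integer n ≥ 3 and all real numbers x₁, x₂ with x₁ ≠ 0, x₂ ≠ 0, x₁ ≠ −1 and x₂ ≠ −1: ∑_{k=0}^{n} C(n,k) · x₁·x₂·(x₁+1)·(x₂+1) · (x₁+k)^{(k−2 : ℤ)} · (x₂+n−k)^{(n−k−2 : ℤ)} = ( (x₁+x₂)³ − 3n(x₁+x₂) − 2n ) · (x₁+x₂+n)^{n−3} + ( (x₁+x₂)² / (x₁·x₂) ) · (x₁+x₂+1) · (x₁+x₂+n)^{n−2}, where C(n,k) denotes the binomial coefficient and (·)^{(m : ℤ)} denotes the integer power (zpow) with exponent m ∈ ℤ (the exponents are negative only for k ∈ {0, 1, n−1, n}, where the corresponding bases x₁, x₁+1, x₂+1, x₂ are nonzero by hypothesis). -/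
open Finset Filter Topology

noncomputable def abelA (n : ℕ) (x y : ℝ) (p q : ℤ) : ℝ :=
  ∑ k ∈ Finset.range (n + 1),
    (n.choose k : ℝ) * (x + k) ^ ((k : ℤ) + p) * (y + n - k) ^ ((n : ℤ) - k + q)

def Gen (x : ℝ) : Prop := ∀ k : ℕ, x + (k : ℝ) ≠ 0

lemma Gen.ne {x : ℝ} (h : Gen x) : x ≠ 0 := by simpa using h 0

lemma Gen.succ {x : ℝ} (h : Gen x) : Gen (x + 1) := by
  intro k
  have := h (k + 1)
  push_cast at this
  intro hc; apply this; linarith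

lemma Gen.ne' {x : ℝ} (h : Gen x) : x + 1 ≠ 0 := by simpa using h 1

lemma Gen.sub {y : ℝ} (h : Gen y) {n k : ℕ} (hk : k ≤ n) : y + (n : ℝ) - k ≠ 0 := by
  have := h (n - k)
  rw [Nat.cast_sub hk] at this
  intro hc; apply this; linarith

lemma abelA_pascal (n : ℕ) (x y : ℝ) (p q : ℤ) :
    abelA (n+1) x y p q = abelA n x (y+1) p (q+1) + abelA n (x+1) y (p+1) q := by
  unfold abelA
  rw [Finset.sum_range_succ' _ (n+1)]
  simp only [Nat.choose_succ_succ, Nat.cast_add, add_mul, Finset.sum_add_distrib]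
  push_cast
  have hA : ∑ k ∈ Finset.range (n + 1),
        (n.choose k : ℝ) * (x + ((k:ℝ) + 1)) ^ ((k:ℤ) + 1 + p) *
          (y + ((n:ℝ) + 1) - ((k:ℝ) + 1)) ^ ((n:ℤ) + 1 - ((k:ℤ) + 1) + q)
      = ∑ k ∈ Finset.range (n + 1),
        (n.choose k : ℝ) * (x + 1 + (k:ℝ)) ^ ((k:ℤ) + (p + 1)) * (y + (n:ℝ) - (k:ℝ)) ^ ((n:ℤ) - (k:ℤ) + q) := by
    refine Finset.sum_congr rfl fun k _ => by ring
  have hB : (∑ k ∈ Finset.range (n + 1),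
        (n.choose k.succ : ℝ) * (x + ((k:ℝ) + 1)) ^ ((k:ℤ) + 1 + p) *
          (y + ((n:ℝ) + 1) - ((k:ℝ) + 1)) ^ ((n:ℤ) + 1 - ((k:ℤ) + 1) + q))
      + ((n + 1).choose 0 : ℝ) * (x + 0) ^ (0 + p) * (y + ((n:ℝ) + 1) - 0) ^ ((n:ℤ) + 1 - 0 + q)
      = ∑ k ∈ Finset.range (n + 1),
        (n.choose k : ℝ) * (x + (k:ℝ)) ^ ((k:ℤ) + p) * (y + 1 + (n:ℝ) - (k:ℝ)) ^ ((n:ℤ) - (k:ℤ) + (q + 1)) := by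
    rw [Finset.sum_range_succ'
      (fun k => (n.choose k : ℝ) * (x + (k:ℝ)) ^ ((k:ℤ) + p) * (y + 1 + (n:ℝ) - (k:ℝ)) ^ ((n:ℤ) - (k:ℤ) + (q + 1))) n]
    rw [Finset.sum_range_succ]
    simp only [Nat.choose_succ_self, Nat.cast_zero, Nat.choose_zero_right, Nat.cast_one,
      Nat.succ_eq_add_one, zero_mul, add_zero]
    push_cast
    congr 1
    · exact Finset.sum_congr rfl fun k _ => by ring
    · ring
  linear_combination hA + hB

lemma abelA_symm (n : ℕ) (x y : ℝ) (p q : ℤ) : abelA n x y p q = abelA n y x q p := by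
  unfold abelA
  rw [← Finset.sum_range_reflect]
  refine Finset.sum_congr rfl fun k hk => ?_
  rw [Finset.mem_range] at hk
  have hk' : k ≤ n := by omega
  simp only [Nat.add_sub_cancel]
  rw [Nat.choose_symm hk']
  push_cast [Nat.cast_sub hk']
  ring

lemma abelA_absorb (n : ℕ) (x y : ℝ) (p q : ℤ) (hy : Gen y) :
    abelA (n+1) x y p (q+1)
      = y * abelA (n+1) x y p q + ((n:ℝ)+1) * abelA n x (y+1) p (q+1) := by
  have hext : abelA n x (y+1) p (q+1) = ∑ k ∈ Finset.range (n+1+1),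
      (n.choose k : ℝ) * (x + k) ^ ((k:ℤ)+p) * (y+1+(n:ℝ)-k)^((n:ℤ)-(k:ℤ)+(q+1)) := by
    unfold abelA
    conv_rhs => rw [Finset.sum_range_succ]
    simp [Nat.choose_succ_self]
  rw [hext]
  unfold abelA
  rw [Finset.mul_sum, Finset.mul_sum, ← Finset.sum_add_distrib]
  refine Finset.sum_congr rfl fun k hk => ?_
  rw [Finset.mem_range] at hk
  have hk' : k ≤ n + 1 := by omega
  push_cast
  have hY : y + ((n:ℝ)+1) - k ≠ 0 := by
    have := hy.sub (n := n+1) (k := k) hk'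
    push_cast at this
    convert this using 2
  have hc : (n.choose k : ℝ) * ((n:ℝ)+1) = (((n+1).choose k : ℝ)) * (((n:ℝ)+1) - k) := by
    have h1 := Nat.choose_mul_succ_eq n k
    have h2 : ((n.choose k * (n + 1) : ℕ) : ℝ) = (((n + 1).choose k * (n + 1 - k) : ℕ) : ℝ) := by
      rw [h1]
    push_cast [Nat.cast_sub hk'] at h2
    convert h2 using 2
  have hsplit : (y + ((n:ℝ)+1) - k) ^ ((n:ℤ) + 1 - k + (q+1))
      = (y + ((n:ℝ)+1) - k) ^ ((n:ℤ) + 1 - k + q) * (y + ((n:ℝ)+1) - k) := by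
    rw [show (n:ℤ) + 1 - k + (q+1) = ((n:ℤ) + 1 - k + q) + 1 by ring, zpow_add_one₀ hY]
  have hsplit2 : (y + 1 + (n:ℝ) - k) ^ ((n:ℤ) - (k:ℤ) + (q+1))
      = (y + ((n:ℝ)+1) - k) ^ ((n:ℤ) + 1 - k + q) := by
    rw [show y + 1 + (n:ℝ) - k = y + ((n:ℝ)+1) - k by ring,
      show (n:ℤ) - (k:ℤ) + (q+1) = (n:ℤ) + 1 - k + q by ring]
  rw [hsplit, hsplit2]
  linear_combination (-((x + (k:ℝ)) ^ ((k:ℤ) + p)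
    * (y + ((n:ℝ)+1) - (k:ℝ)) ^ ((n:ℤ) + 1 - (k:ℤ) + q))) * hc

lemma abelA_absorb_x (n : ℕ) (x y : ℝ) (p q : ℤ) (hx : Gen x) :
    abelA (n+1) x y (p+1) q
      = x * abelA (n+1) x y p q + ((n:ℝ)+1) * abelA n (x+1) y (p+1) q := by
  rw [abelA_symm (n+1) x y (p+1) q, abelA_absorb n y x q p hx, abelA_symm (n+1) y x q p,
    abelA_symm n y (x+1) q (p+1)]

lemma abelA_base : ∀ (n : ℕ) (x y : ℝ), Gen x → Gen y →
    abelA n x y (-1) 0 = (x + y + n)^n / x := by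
  intro n
  induction n with
  | zero =>
    intro x y hx hy
    unfold abelA
    rw [Finset.sum_range_one]
    norm_num
  | succ n ih =>
    intro x y hx hy
    have habs := abelA_absorb n x y (-1) (-1) hy
    have hpas := abelA_pascal n x y (-1) (-1)
    have hsym := abelA_symm n (x+1) y ((-1)+1) (-1)
    norm_num at habs hpas hsym
    have h1 := ih x (y+1) hx hy.succ
    have h2 := ih y (x+1) hy hx.succ
    rw [hsym, h2, h1] at hpas
    rw [hpas, h1] at habs
    rw [habs]
    have hx0 := hx.ne
    have hy0 := hy.ne
    push_cast
    field_simp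
    ring

lemma abelA_C1 (n : ℕ) (x y : ℝ) (hx : Gen x) (hy : Gen y) :
    x * y * abelA (n+1) x y (-1) (-1) = (x + y) * (x + y + ((n:ℝ)+1))^n := by
  have hpas := abelA_pascal n x y (-1) (-1)
  have hsym := abelA_symm n (x+1) y ((-1)+1) (-1)
  norm_num at hpas hsym
  have b1 : x * abelA n x (y+1) (-1) 0 = (x + (y+1) + (n:ℝ))^n := by
    rw [abelA_base n x (y+1) hx hy.succ, mul_div_cancel₀ _ hx.ne]
  have b2 : y * abelA n y (x+1) (-1) 0 = (y + (x+1) + (n:ℝ))^n := by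
    rw [abelA_base n y (x+1) hy hx.succ, mul_div_cancel₀ _ hy.ne]
  linear_combination (x*y) * hpas + (x*y) * hsym + y * b1 + x * b2

lemma abelA_C2 (n : ℕ) (x y : ℝ) (hx : Gen x) (hy : Gen y) :
    x^2 * (x+1) * abelA (n+1) x y (-2) 0
      = (x+1) * (x + y + ((n:ℝ)+1))^(n+1) - ((n:ℝ)+1) * x * (x + y + ((n:ℝ)+1))^n := by
  have habs := abelA_absorb_x n x y (-2) 0 hx
  norm_num at habs
  have b1 : x * abelA (n+1) x y (-1) 0 = (x + y + ((n:ℝ)+1))^(n+1) := by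
    rw [abelA_base (n+1) x y hx hy]; push_cast; rw [mul_div_cancel₀ _ hx.ne]
  have b2 : (x+1) * abelA n (x+1) y (-1) 0 = ((x+1) + y + (n:ℝ))^n := by
    rw [abelA_base n (x+1) y hx.succ hy, mul_div_cancel₀ _ hx.ne']
  linear_combination (-(x*(x+1))) * habs + (x+1) * b1 + (-(((n:ℝ)+1)*x)) * b2

lemma abelA_C3 (n : ℕ) (x y : ℝ) (hx : Gen x) (hy : Gen y) :
    x^2 * (x+1) * y * abelA (n+2) x y (-2) (-1)
      = y * (x+1) * (x + y + ((n:ℝ)+2))^(n+1) - ((n:ℝ)+1) * x * y * (x + y + ((n:ℝ)+2))^n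
        + x^2 * ((x+1) + y) * (x + y + ((n:ℝ)+2))^n := by
  have hpas := abelA_pascal (n+1) x y (-2) (-1)
  norm_num at hpas
  have c2 := abelA_C2 n x (y+1) hx hy.succ
  have c1 := abelA_C1 n (x+1) y hx.succ hy
  push_cast at hpas c2 c1 ⊢
  linear_combination (x^2*(x+1)*y) * hpas + y * c2 + x^2 * c1

lemma abelA_C4 (n : ℕ) (x y : ℝ) (hx : Gen x) (hy : Gen y) :
    x^2 * (x+1) * y^2 * (y+1) * abelA (n+3) x y (-2) (-2)
      = y^2 * ((y+1) * (x+1) * (x + y + ((n:ℝ)+3))^(n+1)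
          - ((n:ℝ)+1) * x * (y+1) * (x + y + ((n:ℝ)+3))^n
          + x^2 * (x+y+2) * (x + y + ((n:ℝ)+3))^n)
        + x^2 * ((x+1) * (y+1) * (x + y + ((n:ℝ)+3))^(n+1)
          - ((n:ℝ)+1) * y * (x+1) * (x + y + ((n:ℝ)+3))^n
          + y^2 * (x+y+2) * (x + y + ((n:ℝ)+3))^n) := by
  have hpas := abelA_pascal (n+2) x y (-2) (-2)
  have hsym := abelA_symm (n+2) (x+1) y ((-2)+1) (-2)
  norm_num at hpas hsym
  have c3a := abelA_C3 n x (y+1) hx hy.succ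
  have c3b := abelA_C3 n y (x+1) hy hx.succ
  push_cast at hpas hsym c3a c3b ⊢
  linear_combination (x^2*(x+1)*y^2*(y+1)) * hpas + (x^2*(x+1)*y^2*(y+1)) * hsym
    + y^2 * c3a + x^2 * c3b

lemma main_generic (n : ℕ) (hn : 3 ≤ n) (x₁ x₂ : ℝ) (hx : Gen x₁) (hy : Gen x₂) :
    ∑ k ∈ Finset.range (n + 1),
        (n.choose k : ℝ) * (x₁ * x₂ * (x₁ + 1) * (x₂ + 1))
          * (x₁ + k) ^ ((k : ℤ) - 2) * (x₂ + n - k) ^ ((n : ℤ) - k - 2)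
      = ((x₁ + x₂) ^ 3 - 3 * n * (x₁ + x₂) - 2 * n) * (x₁ + x₂ + n) ^ (n - 3)
        + ((x₁ + x₂) ^ 2 / (x₁ * x₂)) * (x₁ + x₂ + 1) * (x₁ + x₂ + n) ^ (n - 2) := by
  obtain ⟨m, rfl⟩ : ∃ m, n = m + 3 := ⟨n - 3, by omega⟩
  have hfac : ∑ k ∈ Finset.range (m + 3 + 1),
        ((m+3).choose k : ℝ) * (x₁ * x₂ * (x₁ + 1) * (x₂ + 1))
          * (x₁ + k) ^ ((k : ℤ) - 2) * (x₂ + (m+3:ℕ) - k) ^ (((m+3:ℕ) : ℤ) - k - 2)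
      = (x₁ * x₂ * (x₁ + 1) * (x₂ + 1)) * abelA (m+3) x₁ x₂ (-2) (-2) := by
    unfold abelA
    rw [Finset.mul_sum]
    refine Finset.sum_congr rfl fun k _ => by push_cast; ring
  rw [hfac]
  have h4 := abelA_C4 m x₁ x₂ hx hy
  rw [show m + 3 - 3 = m by omega, show m + 3 - 2 = m + 1 by omega]
  have hxy : x₁ * x₂ ≠ 0 := mul_ne_zero hx.ne hy.ne
  apply mul_left_cancel₀ hxy
  push_cast at h4 ⊢
  field_simp [hx.ne, hy.ne]
  linear_combination h4

lemma gen_eventually (x : ℝ) : ∀ᶠ j : ℕ in atTop, Gen (x + 1/(j:ℝ)) := by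
  by_cases h : ∃ (j k : ℕ), 1 ≤ j ∧ x + 1/(j:ℝ) + k = 0
  · obtain ⟨j₀, k₀, hj₀, hk₀⟩ := h
    filter_upwards [eventually_gt_atTop j₀] with j hj
    intro k hk
    have hj0R : (0:ℝ) < j₀ := by exact_mod_cast hj₀
    have hjj : (j₀:ℝ) < j := by exact_mod_cast hj
    have hjpos : (0:ℝ) < j := lt_trans hj0R hjj
    have e : 1/(j₀:ℝ) - 1/(j:ℝ) = (k:ℝ) - k₀ := by linarith
    have h1 : (0:ℝ) < 1/(j₀:ℝ) - 1/(j:ℝ) := by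
      have := one_div_lt_one_div_of_lt hj0R hjj
      linarith
    have h2 : 1/(j₀:ℝ) - 1/(j:ℝ) < 1 := by
      have ha : 1/(j₀:ℝ) ≤ 1 := by
        rw [div_le_one hj0R]
        exact_mod_cast hj₀
      have hb : 0 < 1/(j:ℝ) := by positivity
      linarith
    have hkk : k₀ < k := by
      by_contra h'
      push_neg at h'
      have : (k:ℝ) ≤ k₀ := by exact_mod_cast h'
      linarith
    have : (k₀:ℝ) + 1 ≤ k := by exact_mod_cast hkk
    linarith
  · push_neg at h
    filter_upwards [eventually_ge_atTop 1] with j hj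
    intro k
    exact h j k hj

theorem abel_identity_m2_m2 (n : ℕ) (hn : 3 ≤ n) (x₁ x₂ : ℝ)
    (h10 : x₁ ≠ 0) (h20 : x₂ ≠ 0) (h11 : x₁ ≠ -1) (h21 : x₂ ≠ -1) :
    ∑ k ∈ Finset.range (n + 1),
        (n.choose k : ℝ) * (x₁ * x₂ * (x₁ + 1) * (x₂ + 1))
          * (x₁ + k) ^ ((k : ℤ) - 2) * (x₂ + n - k) ^ ((n : ℤ) - k - 2)
      = ((x₁ + x₂) ^ 3 - 3 * n * (x₁ + x₂) - 2 * n) * (x₁ + x₂ + n) ^ (n - 3)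
        + ((x₁ + x₂) ^ 2 / (x₁ * x₂)) * (x₁ + x₂ + 1) * (x₁ + x₂ + n) ^ (n - 2) := by
  have hx1 : x₁ + 1 ≠ 0 := fun h => h11 (by linarith)
  have hx2 : x₂ + 1 ≠ 0 := fun h => h21 (by linarith)
  set L : ℝ → ℝ := fun t => ∑ k ∈ Finset.range (n + 1),
        (n.choose k : ℝ) * ((x₁+t) * (x₂+t) * ((x₁+t) + 1) * ((x₂+t) + 1))
          * ((x₁+t) + k) ^ ((k : ℤ) - 2) * ((x₂+t) + n - k) ^ ((n : ℤ) - k - 2) with hLdef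
  set R : ℝ → ℝ := fun t =>
        (((x₁+t) + (x₂+t)) ^ 3 - 3 * n * ((x₁+t) + (x₂+t)) - 2 * n)
            * ((x₁+t) + (x₂+t) + n) ^ (n - 3)
        + (((x₁+t) + (x₂+t)) ^ 2 / ((x₁+t) * (x₂+t))) * ((x₁+t) + (x₂+t) + 1)
            * ((x₁+t) + (x₂+t) + n) ^ (n - 2) with hRdef
  have hcl : ContinuousAt L 0 := by
    rw [hLdef]
    apply tendsto_finset_sum
    intro k hk
    rw [Finset.mem_range] at hk
    have hc1 : ContinuousAt (fun t : ℝ => ((x₁+t) + (k:ℝ)) ^ ((k : ℤ) - 2)) 0 := by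
      have hin : ContinuousAt (fun t : ℝ => x₁ + t + (k:ℝ)) 0 := by fun_prop
      refine hin.zpow₀ ((k:ℤ) - 2) ?_
      show x₁ + 0 + (k:ℝ) ≠ 0 ∨ 0 ≤ (k:ℤ) - 2
      by_cases h2 : 2 ≤ k
      · right; omega
      · left
        interval_cases k
        · simpa using h10
        · norm_num
          exact hx1
    have hc2 : ContinuousAt (fun t : ℝ => ((x₂+t) + (n:ℝ) - (k:ℝ)) ^ ((n : ℤ) - k - 2)) 0 := by
      have hin : ContinuousAt (fun t : ℝ => x₂ + t + (n:ℝ) - (k:ℝ)) 0 := by fun_prop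
      refine hin.zpow₀ ((n:ℤ) - k - 2) ?_
      show x₂ + 0 + (n:ℝ) - (k:ℝ) ≠ 0 ∨ 0 ≤ (n:ℤ) - k - 2
      by_cases h2 : (k:ℤ) ≤ (n:ℤ) - 2
      · right; omega
      · left
        have hkn : k ≤ n := by omega
        have hcast : (n:ℝ) - (k:ℝ) = ((n - k : ℕ) : ℝ) := by rw [Nat.cast_sub hkn]
        have hnk : n - k = 0 ∨ n - k = 1 := by omega
        rw [show x₂ + 0 + (n:ℝ) - (k:ℝ) = x₂ + ((n:ℝ) - (k:ℝ)) by ring, hcast]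
        rcases hnk with h|h <;> rw [h] <;> norm_num [h20, hx2]
    exact ((((continuousAt_const).mul (by fun_prop)).mul hc1).mul hc2)
  have hcr : ContinuousAt R 0 := by
    rw [hRdef]
    apply ContinuousAt.add
    · fun_prop
    · have hne : (x₁ + 0) * (x₂ + 0) ≠ 0 := by
        simpa using mul_ne_zero h10 h20
      exact ((((by fun_prop : ContinuousAt (fun t : ℝ => ((x₁+t) + (x₂+t)) ^ 2) 0).div
        (by fun_prop) hne).mul (by fun_prop)).mul (by fun_prop))
  have ht : Tendsto (fun j : ℕ => 1/(j:ℝ)) atTop (𝓝 0) := tendsto_one_div_atTop_nhds_zero_nat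
  have heq : ∀ᶠ j : ℕ in atTop, L (1/(j:ℝ)) = R (1/(j:ℝ)) := by
    filter_upwards [gen_eventually x₁, gen_eventually x₂] with j h1 h2
    exact main_generic n hn (x₁ + 1/(j:ℝ)) (x₂ + 1/(j:ℝ)) h1 h2
  have hLt : Tendsto (fun j : ℕ => L (1/(j:ℝ))) atTop (𝓝 (L 0)) := hcl.tendsto.comp ht
  have hRt : Tendsto (fun j : ℕ => R (1/(j:ℝ))) atTop (𝓝 (R 0)) := hcr.tendsto.comp ht
  have hkey : L 0 = R 0 := tendsto_nhds_unique (hLt.congr' (heq.mono fun j hj => hj)) hRt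
  rw [hLdef, hRdef] at hkey
  simpa using hkey
end

section
/- (Lacasse identity) For every integer n ≥ 1: n^{n+1} = ∑_{j=1}^{n} ∑_{k=0}^{n−j} C(n,j) · C(n−j,k) · j^{j} · k^{k} · (n−j−k)^{n−j−k}, as an identity of natural numbers, with the convention 0^{0} = 1. -/
open Finset

namespace LacasseAux

/-- `Af m x y = ∑ C(m,k) (x+k)^k (y+m-k)^(m-k)` -/
def Af (m x y : ℕ) : ℕ :=
  ∑ k ∈ range (m+1), m.choose k * (x+k)^k * (y + (m-k))^(m-k)

/-- Abel sum: `Sf m x y = (y+m)^m + ∑_{k=1}^m C(m,k) x (x+k)^(k-1) (y+m-k)^(m-k)` -/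
def Sf (m x y : ℕ) : ℕ :=
  (y+m)^m + ∑ j ∈ range m,
    m.choose (j+1) * (x*(x+(j+1))^j) * (y + (m-(j+1)))^(m-(j+1))

/-- Like `Sf` but with the second exponent raised by one. -/
def Bf (m x y : ℕ) : ℕ :=
  (y+m)^(m+1) + ∑ j ∈ range m,
    m.choose (j+1) * (x*(x+(j+1))^j) * (y + (m-(j+1)))^((m-(j+1))+1)

/-- `Gf m z = ∑ C(m,i) i! z^(m-i)` -/
def Gf (m z : ℕ) : ℕ :=
  ∑ i ∈ range (m+1), m.choose i * i.factorial * z^(m-i)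

lemma hxA (m x y : ℕ) : x * Af m x y =
    (∑ j ∈ range m, m.choose (j+1) * (x*(x+(j+1))^(j+1)) * (y + (m-(j+1)))^(m-(j+1)))
      + x * (y+m)^m := by
  unfold Af
  rw [Finset.sum_range_succ', Nat.mul_add, Finset.mul_sum]
  congr 1
  · apply Finset.sum_congr rfl; intro j _; ring
  · simp

lemma L1 (m x y : ℕ) : (x+y+m) * Sf m x y = Bf m x y + x * Af m x y := by
  rw [hxA]
  unfold Sf Bf
  rw [Nat.mul_add, Finset.mul_sum]
  have hterm : ∀ j ∈ range m,
      (x+y+m) * (m.choose (j+1) * (x*(x+(j+1))^j) * (y + (m-(j+1)))^(m-(j+1)))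
        = m.choose (j+1) * (x*(x+(j+1))^j) * (y + (m-(j+1)))^((m-(j+1))+1)
          + m.choose (j+1) * (x*(x+(j+1))^(j+1)) * (y + (m-(j+1)))^(m-(j+1)) := by
    intro j hj
    have hs : (y + (m-(j+1))) + (x+(j+1)) = x+y+m := by
      have := mem_range.1 hj; omega
    rw [← hs]; ring
  rw [Finset.sum_congr rfl hterm, Finset.sum_add_distrib]
  ring

lemma L2 (m x y : ℕ) : Sf (m+1) x y = Bf m x (y+1) + x * Af m (x+1) y := by
  unfold Sf Bf Af
  rw [Finset.mul_sum]
  have hsplit : ∀ j ∈ range (m+1),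
      (m+1).choose (j+1) * (x*(x+(j+1))^j) * (y + ((m+1)-(j+1)))^((m+1)-(j+1))
        = m.choose (j+1) * (x*(x+(j+1))^j) * (y + (m-j))^(m-j)
          + m.choose j * (x*(x+(j+1))^j) * (y + (m-j))^(m-j) := by
    intro j _
    have h1 : (m+1)-(j+1) = m - j := by omega
    rw [h1, Nat.choose_succ_succ']
    ring
  rw [Finset.sum_congr rfl hsplit, Finset.sum_add_distrib]
  have hfirst : ∑ j ∈ range (m+1),
      m.choose (j+1) * (x*(x+(j+1))^j) * (y + (m-j))^(m-j)
      = ∑ j ∈ range m,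
        m.choose (j+1) * (x*(x+(j+1))^j) * ((y+1) + (m-(j+1)))^((m-(j+1))+1) := by
    rw [Finset.sum_range_succ, Nat.choose_succ_self]
    simp only [Nat.zero_mul, Nat.mul_zero, zero_mul, mul_zero, Nat.add_zero, add_zero]
    apply Finset.sum_congr rfl
    intro j hj
    have hj' := mem_range.1 hj
    have h2 : (y+1) + (m-(j+1)) = y + (m-j) := by omega
    have h3 : (m-(j+1))+1 = m-j := by omega
    rw [h2, h3]
  have hsecond : ∑ j ∈ range (m+1),
      m.choose j * (x*(x+(j+1))^j) * (y + (m-j))^(m-j)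
      = ∑ k ∈ range (m+1), x * (m.choose k * ((x+1)+k)^k * (y + (m-k))^(m-k)) := by
    apply Finset.sum_congr rfl
    intro k _
    have : (x+1)+k = x+(k+1) := by omega
    rw [this]; ring
  rw [hfirst, hsecond]
  have hhead : y+(m+1) = (y+1)+m := by omega
  rw [hhead]
  ring

lemma L3 (m x y : ℕ) : Af (m+1) x y = Sf (m+1) x y + (m+1) * Af m (x+1) y := by
  unfold Af Sf
  rw [Finset.sum_range_succ' _ (m+1), Finset.mul_sum]
  have hterm : ∀ j ∈ range (m+1),
      (m+1).choose (j+1) * (x+(j+1))^(j+1) * (y + ((m+1)-(j+1)))^((m+1)-(j+1))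
        = (m+1).choose (j+1) * (x*(x+(j+1))^j) * (y + ((m+1)-(j+1)))^((m+1)-(j+1))
          + (m+1) * (m.choose j * ((x+1)+j)^j * (y + (m-j))^(m-j)) := by
    intro j _
    have h1 : (m+1)-(j+1) = m-j := by omega
    have h2 : (m+1).choose (j+1) * (j+1) = (m+1) * m.choose j :=
      (Nat.add_one_mul_choose_eq m j).symm
    have h3 : (x+1)+j = x+(j+1) := by omega
    rw [h1, h3]
    calc (m+1).choose (j+1) * (x+(j+1))^(j+1) * (y + (m-j))^(m-j)
        = (m+1).choose (j+1) * (x*(x+(j+1))^j) * (y + (m-j))^(m-j)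
          + ((m+1).choose (j+1) * (j+1)) * ((x+(j+1))^j * (y + (m-j))^(m-j)) := by ring
      _ = _ := by rw [h2]; ring
  rw [Finset.sum_congr rfl hterm, Finset.sum_add_distrib]
  simp only [Nat.choose_zero_right, pow_zero, Nat.sub_zero, one_mul, Nat.add_zero]
  ring

lemma Grec (m z : ℕ) : Gf (m+1) z = z^(m+1) + (m+1) * Gf m z := by
  unfold Gf
  rw [Finset.sum_range_succ', Finset.mul_sum]
  have hterm : ∀ j ∈ range (m+1),
      (m+1).choose (j+1) * (j+1).factorial * z^((m+1)-(j+1))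
        = (m+1) * (m.choose j * j.factorial * z^(m-j)) := by
    intro j _
    have h1 : (m+1)-(j+1) = m-j := by omega
    have h2 : (m+1).choose (j+1) * (j+1) = (m+1) * m.choose j :=
      (Nat.add_one_mul_choose_eq m j).symm
    rw [h1, Nat.factorial_succ]
    calc (m+1).choose (j+1) * ((j+1) * j.factorial) * z^(m-j)
        = ((m+1).choose (j+1) * (j+1)) * (j.factorial * z^(m-j)) := by ring
      _ = _ := by rw [h2]; ring
  rw [Finset.sum_congr rfl hterm]
  simp only [Nat.choose_zero_right, Nat.factorial_zero, Nat.sub_zero, one_mul, mul_one]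
  ring

theorem key (m : ℕ) : ∀ x y : ℕ,
    Sf m x y = (x+y+m)^m ∧ Af m x y = Gf m (x+y+m) := by
  induction m with
  | zero =>
    intro x y
    constructor <;> simp [Sf, Af, Gf]
  | succ m ih =>
    intro x y
    have hz : (x+1)+y+m = x+(y+1)+m := by omega
    have hz2 : x+(y+1)+m = x+y+(m+1) := by omega
    have hAyx : Af m (x+1) y = Af m x (y+1) := by
      rw [(ih (x+1) y).2, (ih x (y+1)).2, hz]
    have hS : Sf (m+1) x y = (x+y+(m+1))^(m+1) := by
      have h2 := L1 m x (y+1)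
      have hcan : Sf (m+1) x y + x * Af m x (y+1)
          = (x+y+(m+1))^(m+1) + x * Af m x (y+1) := by
        calc Sf (m+1) x y + x * Af m x (y+1)
            = (Bf m x (y+1) + x * Af m (x+1) y) + x * Af m x (y+1) := by rw [L2]
          _ = (Bf m x (y+1) + x * Af m x (y+1)) + x * Af m (x+1) y := by ring
          _ = (x+(y+1)+m) * Sf m x (y+1) + x * Af m (x+1) y := by rw [h2]
          _ = (x+y+(m+1))^(m+1) + x * Af m (x+1) y := by
              rw [(ih x (y+1)).1, hz2]; ring
          _ = (x+y+(m+1))^(m+1) + x * Af m x (y+1) := by rw [hAyx]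
      exact Nat.add_right_cancel hcan
    refine ⟨hS, ?_⟩
    rw [L3, hS, (ih (x+1) y).2, Grec, hz, hz2]

lemma extend_sum (n : ℕ) (g : ℕ → ℕ → ℕ) (j : ℕ) :
    ∑ i ∈ range (n+1-j), g j i
      = ∑ i ∈ range (n+1), if j + i ≤ n then g j i else 0 := by
  calc ∑ i ∈ range (n+1-j), g j i
      = ∑ i ∈ range (n+1-j), (if j + i ≤ n then g j i else 0) := by
        apply Finset.sum_congr rfl
        intro i hi
        rw [if_pos]
        have := mem_range.1 hi; omega
    _ = ∑ i ∈ range (n+1), (if j + i ≤ n then g j i else 0) := by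
        apply Finset.sum_subset (Finset.range_subset_range.2 (by omega))
        intro i hi his
        rw [if_neg]
        have h1 := mem_range.1 hi
        have h2 : ¬ i < n+1-j := fun h => his (mem_range.2 h)
        omega

lemma tri_swap (n : ℕ) (f : ℕ → ℕ → ℕ) :
    ∑ j ∈ range (n+1), ∑ i ∈ range (n+1-j), f j i
      = ∑ i ∈ range (n+1), ∑ j ∈ range (n+1-i), f j i := by
  rw [Finset.sum_congr rfl (fun j _ => extend_sum n f j), Finset.sum_comm]
  apply Finset.sum_congr rfl
  intro i _
  rw [extend_sum n (fun a b => f b a) i]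
  apply Finset.sum_congr rfl
  intro j _
  have : j + i ≤ n ↔ i + j ≤ n := by omega
  simp only [this]

lemma regroup (n : ℕ) (f : ℕ → ℕ) :
    ∑ i ∈ range (n+1), ∑ s ∈ range (n+1-i), f (i+s)
      = ∑ m ∈ range (n+1), (m+1) * f m := by
  have h1 : ∀ i ∈ range (n+1), ∑ s ∈ range (n+1-i), f (i+s) = ∑ m ∈ Icc i n, f m := by
    intro i _
    rw [← Finset.Ico_add_one_right_eq_Icc, Finset.sum_Ico_eq_sum_range]
  rw [Finset.sum_congr rfl h1]
  have h2 : ∀ i ∈ range (n+1), ∑ m ∈ Icc i n, f m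
      = ∑ m ∈ range (n+1), if i ≤ m then f m else 0 := by
    intro i _
    rw [eq_comm, ← Finset.sum_filter]
    apply Finset.sum_congr _ (fun _ _ => rfl)
    ext a
    simp only [Finset.mem_filter, Finset.mem_range, Finset.mem_Icc]
    omega
  rw [Finset.sum_congr rfl h2, Finset.sum_comm]
  apply Finset.sum_congr rfl
  intro m hm
  rw [← Finset.sum_filter]
  have : Finset.filter (fun i => i ≤ m) (range (n+1)) = range (m+1) := by
    ext a
    simp only [Finset.mem_filter, Finset.mem_range]
    have := mem_range.1 hm
    omega
  rw [this, Finset.sum_const, card_range, smul_eq_mul]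

lemma dfmul {n i s : ℕ} (h : i + s ≤ n) :
    n.choose i * i.factorial * ((n-i).choose s * s.factorial)
      = n.choose (i+s) * (i+s).factorial := by
  have h1 : i ≤ n := by omega
  have h2 : s ≤ n - i := by omega
  have e1 := Nat.choose_mul_factorial_mul_factorial h1
  have e2 := Nat.choose_mul_factorial_mul_factorial h2
  have e3 := Nat.choose_mul_factorial_mul_factorial h
  apply Nat.eq_of_mul_eq_mul_right (Nat.factorial_pos (n - (i+s)))
  have hsub : n - i - s = n - (i+s) := by omega
  calc n.choose i * i.factorial * ((n-i).choose s * s.factorial) * (n-(i+s)).factorial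
      = n.choose i * i.factorial * ((n-i).choose s * s.factorial * (n-i-s).factorial) := by
        rw [hsub]; ring
    _ = n.choose i * i.factorial * (n-i).factorial := by rw [e2]
    _ = n.factorial := e1
    _ = n.choose (i+s) * (i+s).factorial * (n-(i+s)).factorial := e3.symm

lemma choose_swap {n i j : ℕ} (h : i + j ≤ n) :
    n.choose j * (n-j).choose i = n.choose i * (n-i).choose j := by
  have d1 := dfmul (n := n) (i := j) (s := i) (by omega)
  have d2 := dfmul (n := n) (i := i) (s := j) h
  apply Nat.eq_of_mul_eq_mul_right
    (Nat.mul_pos (Nat.factorial_pos i) (Nat.factorial_pos j))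
  calc n.choose j * (n-j).choose i * (i.factorial * j.factorial)
      = n.choose j * j.factorial * ((n-j).choose i * i.factorial) := by ring
    _ = n.choose (j+i) * (j+i).factorial := d1
    _ = n.choose (i+j) * (i+j).factorial := by rw [Nat.add_comm]
    _ = n.choose i * i.factorial * ((n-i).choose j * j.factorial) := d2.symm
    _ = n.choose i * (n-i).choose j * (i.factorial * j.factorial) := by ring

lemma telescope (n : ℕ) (hn : 1 ≤ n) :
    ∑ m ∈ range (n+1), m * (n.choose m * m.factorial * n^(n-m)) = n^(n+1) := by
  set d : ℕ → ℕ := fun m => n.choose m * m.factorial * n^(n-m) with hd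
  have hkey : ∀ m, m ≤ n → n * d (m+1) = (n - m) * d m := by
    intro m hm
    rcases Nat.eq_or_lt_of_le hm with heq | hlt
    · subst heq
      simp [hd, Nat.choose_succ_self]
    · have e1 : n - m = (n - m - 1) + 1 := by omega
      have e2 : n - (m+1) = n - m - 1 := by omega
      simp only [hd, e2]
      rw [Nat.factorial_succ]
      calc n * (n.choose (m+1) * ((m+1) * m.factorial) * n^(n-m-1))
          = (n.choose (m+1) * (m+1)) * (m.factorial * (n * n^(n-m-1))) := by ring
        _ = (n.choose m * (n - m)) * (m.factorial * (n * n^(n-m-1))) := by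
            rw [Nat.choose_succ_right_eq]
        _ = (n - m) * (n.choose m * m.factorial * n^((n-m-1)+1)) := by
            rw [pow_succ]; ring
        _ = (n - m) * (n.choose m * m.factorial * n^(n-m)) := by rw [← e1]
  have main : ∀ j, j ≤ n →
      (∑ m ∈ range (j+1), m * d m) + n * d (j+1) = n * d 0 := by
    intro j
    induction j with
    | zero =>
      intro _
      rw [Finset.sum_range_one]
      have := hkey 0 (by omega)
      simpa using this
    | succ j ihj =>
      intro hj
      rw [Finset.sum_range_succ]
      have h1 := hkey (j+1) hj
      have h2 := ihj (by omega)
      have h3 : (j+1) * d (j+1) + n * d ((j+1)+1) = n * d (j+1) := by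
        rw [h1]
        have : (j+1) + (n - (j+1)) = n := by omega
        calc (j+1) * d (j+1) + (n - (j+1)) * d (j+1) = ((j+1) + (n-(j+1))) * d (j+1) := by ring
          _ = n * d (j+1) := by rw [this]
      omega
  have hfin := main n le_rfl
  have hd0 : d 0 = n^n := by simp [hd]
  have hdn1 : d (n+1) = 0 := by simp [hd, Nat.choose_succ_self]
  rw [hdn1, hd0] at hfin
  have hfin' : ∑ m ∈ range (n+1), m * d m = n * n^n := by omega
  rw [hfin', pow_succ']

end LacasseAux

open Finset LacasseAux in
theorem lacasse_identity (n : ℕ) (hn : 1 ≤ n) :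
    n ^ (n + 1)
      = ∑ j ∈ Finset.Icc 1 n, ∑ k ∈ Finset.range (n - j + 1),
          n.choose j * (n - j).choose k * j ^ j * k ^ k * (n - j - k) ^ (n - j - k) := by
  have hA00 : ∀ m : ℕ, Af m 0 0 = Gf m m := by
    intro m
    have := (key m 0 0).2
    simpa using this
  have e1 : ∀ j ∈ Icc 1 n,
      (∑ k ∈ Finset.range (n - j + 1),
        n.choose j * (n - j).choose k * j ^ j * k ^ k * (n - j - k) ^ (n - j - k))
      = n.choose j * j ^ j * Gf (n-j) (n-j) := by
    intro j _
    rw [← hA00]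
    unfold Af
    rw [Finset.mul_sum]
    apply Finset.sum_congr rfl
    intro k _
    simp only [Nat.zero_add, zero_add]
    ring
  rw [Finset.sum_congr rfl e1]
  -- main computation
  have main : ∑ j ∈ range (n+1), n.choose j * j^j * Gf (n-j) (n-j)
      = n^(n+1) + Gf n n := by
    have step1 : ∀ j ∈ range (n+1), n.choose j * j^j * Gf (n-j) (n-j)
        = ∑ i ∈ range (n+1-j),
            n.choose j * j^j * ((n-j).choose i * i.factorial * (n-j)^((n-j)-i)) := by
      intro j hj
      have hr : (n-j) + 1 = n+1-j := by have := mem_range.1 hj; omega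
      unfold Gf
      rw [hr, Finset.mul_sum]
    have step3 : ∀ i ∈ range (n+1),
        (∑ j ∈ range (n+1-i),
          n.choose j * j^j * ((n-j).choose i * i.factorial * (n-j)^((n-j)-i)))
        = n.choose i * i.factorial * Gf (n-i) n := by
      intro i hi
      have hi' : i ≤ n := by have := mem_range.1 hi; omega
      have hAf : Af (n-i) 0 i = Gf (n-i) n := by
        have h := (key (n-i) 0 i).2
        have h0 : 0 + i + (n-i) = n := by omega
        rwa [h0] at h
      rw [← hAf]
      unfold Af
      rw [Finset.mul_sum]
      have hr : (n-i) + 1 = n+1-i := by omega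
      rw [hr]
      apply Finset.sum_congr rfl
      intro j hj
      have hij : i + j ≤ n := by have := mem_range.1 hj; omega
      have h1 := choose_swap hij
      have h2 : (n-j) - i = (n-i) - j := by omega
      have h3 : i + ((n-i) - j) = n - j := by omega
      rw [h2, h3]
      simp only [Nat.zero_add, zero_add]
      calc n.choose j * j^j * ((n-j).choose i * i.factorial * (n-j)^((n-i)-j))
          = (n.choose j * (n-j).choose i) * (j^j * i.factorial * (n-j)^((n-i)-j)) := by ring
        _ = (n.choose i * (n-i).choose j) * (j^j * i.factorial * (n-j)^((n-i)-j)) := by rw [h1]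
        _ = n.choose i * i.factorial * ((n-i).choose j * j^j * (n-j)^((n-i)-j)) := by ring
    have step4 : ∀ i ∈ range (n+1),
        n.choose i * i.factorial * Gf (n-i) n
        = ∑ s ∈ range (n+1-i),
            n.choose (i+s) * (i+s).factorial * n^(n-(i+s)) := by
      intro i hi
      have hi' : i ≤ n := by have := mem_range.1 hi; omega
      unfold Gf
      have hr : (n-i) + 1 = n+1-i := by omega
      rw [hr, Finset.mul_sum]
      apply Finset.sum_congr rfl
      intro s hs
      have his : i + s ≤ n := by have := mem_range.1 hs; omega
      have h4 : (n-i)-s = n - (i+s) := by omega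
      rw [h4]
      calc n.choose i * i.factorial * ((n-i).choose s * s.factorial * n^(n-(i+s)))
          = (n.choose i * i.factorial * ((n-i).choose s * s.factorial)) * n^(n-(i+s)) := by
            ring
        _ = n.choose (i+s) * (i+s).factorial * n^(n-(i+s)) := by rw [dfmul his]
    calc ∑ j ∈ range (n+1), n.choose j * j^j * Gf (n-j) (n-j)
        = ∑ j ∈ range (n+1), ∑ i ∈ range (n+1-j),
            n.choose j * j^j * ((n-j).choose i * i.factorial * (n-j)^((n-j)-i)) :=
          Finset.sum_congr rfl step1
      _ = ∑ i ∈ range (n+1), ∑ j ∈ range (n+1-i),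
            n.choose j * j^j * ((n-j).choose i * i.factorial * (n-j)^((n-j)-i)) :=
          tri_swap n _
      _ = ∑ i ∈ range (n+1), n.choose i * i.factorial * Gf (n-i) n :=
          Finset.sum_congr rfl step3
      _ = ∑ i ∈ range (n+1), ∑ s ∈ range (n+1-i),
            n.choose (i+s) * (i+s).factorial * n^(n-(i+s)) :=
          Finset.sum_congr rfl step4
      _ = ∑ m ∈ range (n+1), (m+1) * (n.choose m * m.factorial * n^(n-m)) :=
          regroup n (fun m => n.choose m * m.factorial * n^(n-m))
      _ = (∑ m ∈ range (n+1), m * (n.choose m * m.factorial * n^(n-m)))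
            + ∑ m ∈ range (n+1), n.choose m * m.factorial * n^(n-m) := by
          rw [← Finset.sum_add_distrib]
          apply Finset.sum_congr rfl
          intro m _
          ring
      _ = n^(n+1) + Gf n n := by
          rw [telescope n hn]
          rfl
  have split : ∑ j ∈ range (n+1), n.choose j * j^j * Gf (n-j) (n-j)
      = Gf n n + ∑ j ∈ Icc 1 n, n.choose j * j^j * Gf (n-j) (n-j) := by
    have hins : range (n+1) = insert 0 (Icc 1 n) := by
      ext a
      simp only [Finset.mem_range, Finset.mem_insert, Finset.mem_Icc]
      omega
    rw [hins, Finset.sum_insert (by simp)]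
    simp
  rw [split] at main
  omega
end
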